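/- Let f: ℝⁿ_{<0} → ℝ be continuous. Suppose there is u* ∈ ℝⁿ_{<0} such that for every unit direction ξ, the function t ↦ f(u* + tξ) is monotone increasing on [0, a_ξ), where a_ξ ∈ (0, +∞] is the exit time of the ray u* + tξ from ℝⁿ_{<0}, and f(u* + tξ) → +∞ as t → a_ξ whenever a_ξ = +∞. Then f(x) → +∞ as x → ∞ within ℝⁿ_{<0} (i.e., as ‖x‖ → ∞ or x approaches the boundary at infinity). -/

import Mathlib

open Set Filter

lemma coord_abs_le_norm {n : ℕ} (x : EuclideanSpace ℝ (Fin n)) (i : Fin n) :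
    |x i| ≤ ‖x‖ := by
  rw [EuclideanSpace.norm_eq, ← Real.sqrt_sq_eq_abs]
  apply Real.sqrt_le_sqrt
  calc (x i) ^ 2 = ‖x i‖ ^ 2 := by rw [Real.norm_eq_abs, sq_abs]
    _ ≤ ∑ j, ‖x j‖ ^ 2 :=
      Finset.single_le_sum (f := fun j => ‖x j‖ ^ 2) (fun j _ => sq_nonneg _)
        (Finset.mem_univ i)

/-- Properness lemma (Ge–Xu/Ge–Jiang): let `U = ℝⁿ_{<0}`, `f : U → ℝ` continuous, and
`u* ∈ U`. If along every unit ray from `u*` the function is monotone increasing as long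
as the ray stays in `U`, and tends to `+∞` along rays entirely contained in `U`, then
`f(x) → +∞` as `‖x‖ → ∞` within `U`. -/
theorem properness_lemma (n : ℕ) (f : EuclideanSpace ℝ (Fin n) → ℝ)
    (U : Set (EuclideanSpace ℝ (Fin n)))
    (hU : U = {x : EuclideanSpace ℝ (Fin n) | ∀ i, x i < 0})
    (hf : ContinuousOn f U)
    (ustar : EuclideanSpace ℝ (Fin n)) (hustar : ustar ∈ U)
    (hmono : ∀ ξ : EuclideanSpace ℝ (Fin n), ‖ξ‖ = 1 →
      MonotoneOn (fun t : ℝ => f (ustar + t • ξ)) {t : ℝ | 0 ≤ t ∧ ustar + t • ξ ∈ U})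
    (hinf : ∀ ξ : EuclideanSpace ℝ (Fin n), ‖ξ‖ = 1 →
      (∀ t : ℝ, 0 ≤ t → ustar + t • ξ ∈ U) →
      Tendsto (fun t : ℝ => f (ustar + t • ξ)) atTop atTop) :
    ∀ M : ℝ, ∃ R : ℝ, ∀ x ∈ U, R ≤ ‖x‖ → M ≤ f x := by
  intro M
  -- U is open
  have hUopen : IsOpen U := by
    rw [hU]
    have : {x : EuclideanSpace ℝ (Fin n) | ∀ i, x i < 0}
        = ⋂ i, {x : EuclideanSpace ℝ (Fin n) | x i < 0} := by
      ext x; simp [Set.mem_iInter]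
    rw [this]
    exact isOpen_iInter_of_finite fun i =>
      isOpen_lt (EuclideanSpace.proj (𝕜 := ℝ) i).continuous continuous_const
  set S := Metric.sphere (0 : EuclideanSpace ℝ (Fin n)) 1 with hS
  -- the key pointwise claim on the sphere
  have key : ∀ ξ ∈ S, ∃ ε > 0, ∃ r : ℝ, ∀ ξ' ∈ S, dist ξ' ξ < ε →
      ∀ t : ℝ, r ≤ t → ustar + t • ξ' ∈ U → M ≤ f (ustar + t • ξ') := by
    intro ξ hξ
    have hξ1 : ‖ξ‖ = 1 := by rw [hS] at hξ; simpa using hξ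
    by_cases hray : ∀ t : ℝ, 0 ≤ t → ustar + t • ξ ∈ U
    · -- ray stays in U forever: f → +∞ along it
      have htend := hinf ξ hξ1 hray
      obtain ⟨t0, ht0⟩ := ((htend.eventually (eventually_ge_atTop (M + 1))).and
        (eventually_ge_atTop (0 : ℝ))).exists
      have hmemU : ustar + t0 • ξ ∈ U := hray t0 ht0.2
      -- continuity of ξ' ↦ f (ustar + t0 • ξ') at ξ
      have hg : Continuous fun ξ' : EuclideanSpace ℝ (Fin n) => ustar + t0 • ξ' :=
        continuous_const.add (continuous_const_smul t0)
      have hfc : ContinuousAt f (ustar + t0 • ξ) :=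
        hf.continuousAt (hUopen.mem_nhds hmemU)
      have hcomp : ContinuousAt (fun ξ' => f (ustar + t0 • ξ')) ξ :=
        ContinuousAt.comp (g := f) (f := fun ξ' => ustar + t0 • ξ') hfc hg.continuousAt
      have hev1 : ∀ᶠ ξ' in nhds ξ, M < f (ustar + t0 • ξ') := by
        have : M < f (ustar + t0 • ξ) := by linarith [ht0.1]
        exact continuousAt_const.eventually_lt hcomp this
      have hev2 : ∀ᶠ ξ' in nhds ξ, ustar + t0 • ξ' ∈ U :=
        hg.continuousAt.preimage_mem_nhds (hUopen.mem_nhds hmemU)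
      obtain ⟨ε, hεpos, hε⟩ := Metric.eventually_nhds_iff.mp (hev1.and hev2)
      refine ⟨ε, hεpos, t0, ?_⟩
      intro ξ' hξ'S hd t ht htU
      have hξ'1 : ‖ξ'‖ = 1 := by rw [hS] at hξ'S; simpa using hξ'S
      obtain ⟨hlt, hmem⟩ := hε hd
      have := hmono ξ' hξ'1 (a := t0) (b := t)
        ⟨ht0.2, hmem⟩ ⟨le_trans ht0.2 ht, htU⟩ ht
      exact le_trans hlt.le this
    · -- ray exits U at a finite time
      push_neg at hray
      obtain ⟨t0, ht0pos, ht0notU⟩ := hray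
      rw [hU] at ht0notU
      simp only [Set.mem_setOf_eq, not_forall, not_lt] at ht0notU
      obtain ⟨i, hi⟩ := ht0notU
      have hui : ustar i < 0 := by rw [hU] at hustar; exact hustar i
      have happ : (ustar + t0 • ξ) i = ustar i + t0 * ξ i := rfl
      rw [happ] at hi
      have hξipos : 0 < ξ i := by
        rcases lt_trichotomy (ξ i) 0 with h | h | h
        · nlinarith
        · nlinarith
        · exact h
      set c := ξ i with hc
      refine ⟨c / 2, by positivity, 2 * (-ustar i) / c + 1, ?_⟩
      intro ξ' hξ'S hd t ht htU
      exfalso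
      have hcoord : |ξ' i - ξ i| ≤ ‖ξ' - ξ‖ := by
        have := coord_abs_le_norm (ξ' - ξ) i
        simpa using this
      have hdist : ‖ξ' - ξ‖ < c / 2 := by rwa [← dist_eq_norm]
      have hξ'i : c / 2 < ξ' i := by
        have := abs_lt.mp (lt_of_le_of_lt hcoord hdist)
        linarith
      rw [hU] at htU
      have htUi : ustar i + t * ξ' i < 0 := htU i
      have hA : 0 ≤ 2 * -ustar i / c := div_nonneg (by linarith) hξipos.le
      have htpos : 0 < t := by linarith
      have h2 : (2 * -ustar i / c + 1) * (c / 2) ≤ t * (c / 2) :=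
        mul_le_mul_of_nonneg_right ht (by linarith)
      have h3 : (2 * -ustar i / c + 1) * (c / 2) = -ustar i + c / 2 := by
        field_simp
      have h4 : t * (c / 2) < t * ξ' i := mul_lt_mul_of_pos_left hξ'i htpos
      linarith
  -- choose ε and r for every sphere point
  choose! ε hεpos r hr using key
  -- compactness of the sphere
  have hcomp : IsCompact S := isCompact_sphere 0 1
  obtain ⟨F, hFsub, hFcov⟩ := hcomp.elim_nhds_subcover
    (fun ξ => Metric.ball ξ (ε ξ)) (fun ξ hξ => Metric.ball_mem_nhds ξ (hεpos ξ hξ))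
  -- define R
  set Rsum := ∑ ξ ∈ F, max (r ξ) 0 with hRsum
  have hRsum_nonneg : 0 ≤ Rsum := Finset.sum_nonneg fun ξ _ => le_max_right _ _
  refine ⟨‖ustar‖ + Rsum + 1, ?_⟩
  intro x hxU hxR
  set t := ‖x - ustar‖ with htdef
  have ht1 : Rsum + 1 ≤ t := by
    have := norm_sub_norm_le x ustar
    simp only [htdef]
    linarith
  have htpos : 0 < t := by linarith
  set ξ' := t⁻¹ • (x - ustar) with hξ'def
  have hξ'S : ξ' ∈ S := by
    simp only [hS, Metric.mem_sphere, dist_zero_right, hξ'def, norm_smul,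
      norm_inv, Real.norm_eq_abs, abs_of_pos htpos]
    field_simp
    exact htdef.symm
  have hx : x = ustar + t • ξ' := by
    rw [hξ'def, smul_smul, mul_inv_cancel₀ (ne_of_gt htpos), one_smul]
    abel
  obtain ⟨ξ, hξF, hξball⟩ := Set.mem_iUnion₂.mp (hFcov hξ'S)
  have hrle : max (r ξ) 0 ≤ Rsum :=
    Finset.single_le_sum (fun j _ => le_max_right (r j) 0) hξF
  have htge : r ξ ≤ t := le_trans (le_max_left _ _) (by linarith)
  have := hr ξ (hFsub ξ hξF) ξ' hξ'S (Metric.mem_ball.mp hξball) t htge (hx ▸ hxU)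
  rwa [← hx] at this
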